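/- arXiv:1807.01507 — 2 statements merged into one kernel-verified Lean document; each statement's English description precedes it below -/
import Mathlib

section
/- Let Ω ⊆ ℝⁿ be open and u : Ω → ℝ a C³ function satisfying Δu = 1 on Ω. Define the P-function P = |∇u|² − (2/n)u. Then ΔP ≥ 0 on Ω, i.e., P is subharmonic. -/
open RealInnerProductSpace Finset

noncomputable def pd (n : ℕ) (f : EuclideanSpace ℝ (Fin n) → ℝ) (i : Fin n)
    (x : EuclideanSpace ℝ (Fin n)) : ℝ :=
  fderiv ℝ f x (EuclideanSpace.single i 1)

noncomputable def lap (n : ℕ) (f : EuclideanSpace ℝ (Fin n) → ℝ)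
    (x : EuclideanSpace ℝ (Fin n)) : ℝ :=
  ∑ i, pd n (pd n f i) i x

noncomputable def dvg (n : ℕ) (F : EuclideanSpace ℝ (Fin n) → EuclideanSpace ℝ (Fin n))
    (x : EuclideanSpace ℝ (Fin n)) : ℝ :=
  ∑ i, pd n (fun y => F y i) i x

section aux

variable {n : ℕ} {f : EuclideanSpace ℝ (Fin n) → ℝ} {x : EuclideanSpace ℝ (Fin n)}

lemma pd_congr {g : EuclideanSpace ℝ (Fin n) → ℝ} (h : f =ᶠ[nhds x] g) (i : Fin n) :
    pd n f i x = pd n g i x := by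
  unfold pd; rw [h.fderiv_eq]

lemma pd_contDiffAt {m : ℕ∞} (hf : ContDiffAt ℝ (m + 1) f x) (i : Fin n) :
    ContDiffAt ℝ m (pd n f i) x :=
  (hf.fderiv_right le_rfl).clm_apply contDiffAt_const

lemma hasFDerivAt_pd (hf : ContDiffAt ℝ 2 f x) (a : Fin n) :
    HasFDerivAt (pd n f a)
      ((fderiv ℝ (fderiv ℝ f) x).flip (EuclideanSpace.single a 1)) x := by
  have hd : DifferentiableAt ℝ (fderiv ℝ f) x :=
    (hf.fderiv_right (m := 1) (by norm_num)).differentiableAt one_ne_zero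
  have h := hd.hasFDerivAt.clm_apply (hasFDerivAt_const (EuclideanSpace.single a 1) x)
  simp at h; exact h

lemma pd_pd_eq (hf : ContDiffAt ℝ 2 f x) (a b : Fin n) :
    pd n (pd n f a) b x
      = fderiv ℝ (fderiv ℝ f) x (EuclideanSpace.single b 1) (EuclideanSpace.single a 1) := by
  have := (hasFDerivAt_pd hf a).fderiv
  show fderiv ℝ (pd n f a) x (EuclideanSpace.single b 1) = _
  rw [this]; rfl

lemma pd_comm (hf : ContDiffAt ℝ 2 f x) (a b : Fin n) :
    pd n (pd n f a) b x = pd n (pd n f b) a x := by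
  rw [pd_pd_eq hf, pd_pd_eq hf]
  exact hf.isSymmSndFDerivAt (by simp) _ _

lemma pd_sum {ι : Type*} (s : Finset ι) (f : ι → EuclideanSpace ℝ (Fin n) → ℝ)
    (hf : ∀ i ∈ s, DifferentiableAt ℝ (f i) x) (j : Fin n) :
    pd n (fun y => ∑ i ∈ s, f i y) j x = ∑ i ∈ s, pd n (f i) j x := by
  unfold pd
  rw [fderiv_fun_sum hf]
  simp

end aux

theorem stmt_8 (n : ℕ) (hn : 1 ≤ n) (Ω : Set (EuclideanSpace ℝ (Fin n))) (hΩ : IsOpen Ω)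
    (u : EuclideanSpace ℝ (Fin n) → ℝ) (hu : ContDiffOn ℝ 3 u Ω)
    (hΔ : ∀ x ∈ Ω, lap n u x = 1)
    (P : EuclideanSpace ℝ (Fin n) → ℝ)
    (hP : ∀ x, P x = ‖gradient u x‖ ^ 2 - (2 / n) * u x) :
    ∀ x ∈ Ω, 0 ≤ lap n P x := by
  -- notation
  -- regularity at points of Ω
  have hu3 : ∀ y ∈ Ω, ContDiffAt ℝ 3 u y := fun y hy => hu.contDiffAt (hΩ.mem_nhds hy)
  have hu2 : ∀ y ∈ Ω, ContDiffAt ℝ 2 u y := fun y hy => (hu3 y hy).of_le (by norm_num)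
  have hg2 : ∀ y ∈ Ω, ∀ j, ContDiffAt ℝ 2 (pd n u j) y := by
    intro y hy j
    exact pd_contDiffAt (m := 2) (by exact_mod_cast hu3 y hy) j
  have hH1 : ∀ y ∈ Ω, ∀ j i, ContDiffAt ℝ 1 (pd n (pd n u j) i) y := by
    intro y hy j i
    exact pd_contDiffAt (m := 1) (by exact_mod_cast hg2 y hy j) i
  have hgd : ∀ y ∈ Ω, ∀ j, DifferentiableAt ℝ (pd n u j) y :=
    fun y hy j => (hg2 y hy j).differentiableAt (by norm_num)
  have hHd : ∀ y ∈ Ω, ∀ j i, DifferentiableAt ℝ (pd n (pd n u j) i) y :=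
    fun y hy j i => (hH1 y hy j i).differentiableAt one_ne_zero
  have hud : ∀ y ∈ Ω, DifferentiableAt ℝ u y :=
    fun y hy => (hu2 y hy).differentiableAt (by norm_num)
  -- rewrite P
  have hP' : P = fun y => (∑ j, (pd n u j y) ^ 2) - (2 / n) * u y := by
    funext y
    rw [hP y]
    congr 1
    have hnorm : ‖gradient u y‖ ^ 2 = ⟪gradient u y, gradient u y⟫ := by
      rw [real_inner_self_eq_norm_sq]
    rw [hnorm, PiLp.inner_apply]
    refine Finset.sum_congr rfl fun j _ => ?_
    have h1 : gradient u y j = pd n u j y := by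
      have : ⟪gradient u y, EuclideanSpace.single j (1:ℝ)⟫ = fderiv ℝ u y (EuclideanSpace.single j 1) := by
        unfold gradient
        exact InnerProductSpace.toDual_symm_apply
      rw [EuclideanSpace.inner_single_right] at this
      simpa [pd] using this
    simp [RCLike.inner_apply, h1, pd, sq]
  -- Step A: first derivative of P on Ω
  have hA : ∀ i : Fin n, ∀ y ∈ Ω, pd n P i y
      = (∑ j, 2 * pd n u j y * pd n (pd n u j) i y) - (2 / n) * pd n u i y := by
    intro i y hy
    have hD : HasFDerivAt P
        ((∑ j, (pd n u j y • fderiv ℝ (pd n u j) y + pd n u j y • fderiv ℝ (pd n u j) y))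
          - (2 / (n : ℝ)) • fderiv ℝ u y) y := by
      rw [hP']
      have h1 : ∀ j : Fin n, HasFDerivAt (fun z => (pd n u j z) ^ 2)
          (pd n u j y • fderiv ℝ (pd n u j) y + pd n u j y • fderiv ℝ (pd n u j) y) y := by
        intro j
        have := (hgd y hy j).hasFDerivAt.fun_mul (hgd y hy j).hasFDerivAt
        simpa [sq] using this
      exact (HasFDerivAt.fun_sum (fun j (_ : j ∈ univ) => h1 j)).sub
        ((hud y hy).hasFDerivAt.const_mul _)
    have hfd := hD.fderiv
    show fderiv ℝ P y (EuclideanSpace.single i 1) = _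
    rw [hfd]
    simp only [ContinuousLinearMap.sub_apply, ContinuousLinearMap.sum_apply,
      ContinuousLinearMap.add_apply, ContinuousLinearMap.smul_apply, smul_eq_mul, pd]
    congr 1
    exact Finset.sum_congr rfl fun j _ => by ring
  intro x hx
  -- Step B: second derivative of P at x
  have hB : ∀ i : Fin n, pd n (pd n P i) i x =
      (∑ j, (2 * (pd n (pd n u j) i x) ^ 2
        + 2 * pd n u j x * pd n (pd n (pd n u j) i) i x))
        - (2 / n) * pd n (pd n u i) i x := by
    intro i
    have heq : pd n P i =ᶠ[nhds x]
        fun y => (∑ j, 2 * pd n u j y * pd n (pd n u j) i y) - (2 / n) * pd n u i y := by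
      filter_upwards [hΩ.mem_nhds hx] with y hy using hA i y hy
    rw [pd_congr heq i]
    have hD : HasFDerivAt
        (fun y => (∑ j, 2 * pd n u j y * pd n (pd n u j) i y) - (2 / n) * pd n u i y)
        ((∑ j, ((2 * pd n u j x) • fderiv ℝ (pd n (pd n u j) i) x
          + pd n (pd n u j) i x • ((2:ℝ) • fderiv ℝ (pd n u j) x)))
          - (2 / (n : ℝ)) • fderiv ℝ (pd n u i) x) x := by
      have h1 : ∀ j : Fin n, HasFDerivAt (fun y => 2 * pd n u j y * pd n (pd n u j) i y)
          ((2 * pd n u j x) • fderiv ℝ (pd n (pd n u j) i) x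
            + pd n (pd n u j) i x • ((2:ℝ) • fderiv ℝ (pd n u j) x)) x := by
        intro j
        exact ((hgd x hx j).hasFDerivAt.const_mul 2).mul (hHd x hx j i).hasFDerivAt
      exact (HasFDerivAt.fun_sum (fun j (_ : j ∈ univ) => h1 j)).sub
        ((hgd x hx i).hasFDerivAt.const_mul _)
    have hfd := hD.fderiv
    show fderiv ℝ _ x (EuclideanSpace.single i 1) = _
    rw [hfd]
    simp only [ContinuousLinearMap.sub_apply, ContinuousLinearMap.sum_apply,
      ContinuousLinearMap.add_apply, ContinuousLinearMap.smul_apply, smul_eq_mul, pd]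
    congr 1
    exact Finset.sum_congr rfl fun j _ => by ring
  -- trace of Hessian is 1
  have hΔx : (∑ i, pd n (pd n u i) i x) = 1 := hΔ x hx
  -- third derivatives sum to zero
  have hT : ∀ j : Fin n, (∑ i, pd n (pd n (pd n u j) i) i x) = 0 := by
    intro j
    have hswap : ∀ i : Fin n,
        pd n (pd n (pd n u j) i) i x = pd n (pd n (pd n u i) i) j x := by
      intro i
      have h1 : (pd n (pd n u j) i) =ᶠ[nhds x] (pd n (pd n u i) j) := by
        filter_upwards [hΩ.mem_nhds hx] with y hy using pd_comm (hu2 y hy) j i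
      rw [pd_congr h1 i]
      exact pd_comm (hg2 x hx i) j i
    rw [Finset.sum_congr rfl (fun i _ => hswap i)]
    rw [← pd_sum univ (fun i => pd n (pd n u i) i) (fun i _ => hHd x hx i i) j]
    have hconst : (fun y => ∑ i, pd n (pd n u i) i y) =ᶠ[nhds x] (fun _ => (1 : ℝ)) := by
      filter_upwards [hΩ.mem_nhds hx] with y hy using hΔ y hy
    rw [pd_congr hconst j]
    simp [pd]
  -- put everything together
  have key : lap n P x = 2 * (∑ i, ∑ j, (pd n (pd n u j) i x) ^ 2) - 2 / n := by
    show (∑ i, pd n (pd n P i) i x) = _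
    rw [Finset.sum_congr rfl (fun i _ => hB i), Finset.sum_sub_distrib, ← Finset.mul_sum, hΔx,
      mul_one]
    congr 1
    rw [Finset.sum_comm]
    have hz : ∀ j : Fin n, (∑ i, (2 * (pd n (pd n u j) i x) ^ 2
        + 2 * pd n u j x * pd n (pd n (pd n u j) i) i x))
        = ∑ i, 2 * (pd n (pd n u j) i x) ^ 2 := by
      intro j
      have h0 : (∑ i, 2 * pd n u j x * pd n (pd n (pd n u j) i) i x) = 0 := by
        calc ∑ i, 2 * pd n u j x * pd n (pd n (pd n u j) i) i x
            = 2 * pd n u j x * ∑ i, pd n (pd n (pd n u j) i) i x := by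
              rw [Finset.mul_sum]
          _ = 0 := by rw [hT j, mul_zero]
      rw [Finset.sum_add_distrib, h0, add_zero]
    rw [Finset.sum_congr rfl (fun j _ => hz j)]
    simp only [Finset.mul_sum]
    exact Finset.sum_comm
  -- inequalities
  have hn' : (0 : ℝ) < n := by exact_mod_cast hn
  have hS1 : (∑ i, (pd n (pd n u i) i x) ^ 2) ≤ ∑ i, ∑ j, (pd n (pd n u j) i x) ^ 2 :=
    Finset.sum_le_sum fun i _ =>
      Finset.single_le_sum (f := fun j => (pd n (pd n u j) i x) ^ 2)
        (fun j _ => sq_nonneg _) (mem_univ i)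
  have hCS : (1 : ℝ) ≤ n * ∑ i, (pd n (pd n u i) i x) ^ 2 := by
    have h := sq_sum_le_card_mul_sum_sq (s := (univ : Finset (Fin n)))
      (f := fun i => pd n (pd n u i) i x)
    rw [hΔx] at h
    simpa using h
  rw [key]
  have h2 : 2 / (n : ℝ) ≤ 2 * ∑ i, ∑ j, (pd n (pd n u j) i x) ^ 2 := by
    rw [div_le_iff₀ hn']
    nlinarith [hS1, hCS]
  linarith
end

section
/- Let Ω ⊆ ℝⁿ be open, u : Ω → ℝ a C² function with Δu = 1 on Ω, and X_n(x) = x_n·x − (1/2)(|x|²+1)E_n. Then the pointwise differential identity div(u·X_n − ⟨X_n, ∇u⟩·∇u) = n·x_n·u − x_n·|∇u|² − (1/2)⟨X_n, ∇(|∇u|²)⟩ holds on Ω (wherever u is C²; interpret ∇(|∇u|²) via the Hessian: ∇(|∇u|²) = 2(∇²u)∇u). -/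
open RealInnerProductSpace Finset

lemma clm_expand {n : ℕ} (ℓ : EuclideanSpace ℝ (Fin n) →L[ℝ] ℝ) (v : EuclideanSpace ℝ (Fin n)) :
    ℓ v = ∑ i, v i * ℓ (EuclideanSpace.single i 1) := by
  conv_lhs => rw [← (EuclideanSpace.basisFun (Fin n) ℝ).sum_repr v]
  rw [map_sum]
  simp [EuclideanSpace.basisFun_repr, EuclideanSpace.basisFun_apply, smul_eq_mul]

lemma grad_apply {n : ℕ} (u : EuclideanSpace ℝ (Fin n) → ℝ) (y : EuclideanSpace ℝ (Fin n))
    (j : Fin n) : gradient u y j = fderiv ℝ u y (EuclideanSpace.single j 1) := by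
  have h := InnerProductSpace.toDual_symm_apply (𝕜 := ℝ) (E := EuclideanSpace ℝ (Fin n))
    (y := fderiv ℝ u y) (x := EuclideanSpace.single j 1)
  rw [show gradient u y = (InnerProductSpace.toDual ℝ _).symm (fderiv ℝ u y) from rfl]
  rw [← h, EuclideanSpace.inner_single_right]
  simp

lemma norm_sq_expand {n : ℕ} (v : EuclideanSpace ℝ (Fin n)) : ‖v‖ ^ 2 = ∑ i, v i * v i := by
  rw [← real_inner_self_eq_norm_sq]
  simp only [PiLp.inner_apply, RCLike.inner_apply, conj_trivial]

lemma inner_expand {n : ℕ} (a b : EuclideanSpace ℝ (Fin n)) : (⟪a, b⟫ : ℝ) = ∑ i, a i * b i := by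
  simp [PiLp.inner_apply]
  exact Finset.sum_congr rfl fun i _ => mul_comm _ _

theorem stmt_11 (n : ℕ) (hn : 1 ≤ n) (N : Fin n) (hN : (N : ℕ) = n - 1)
    (Ω : Set (EuclideanSpace ℝ (Fin n))) (hΩ : IsOpen Ω)
    (u : EuclideanSpace ℝ (Fin n) → ℝ) (hu : ContDiffOn ℝ 2 u Ω)
    (hΔ : ∀ x ∈ Ω, lap n u x = 1)
    (X : EuclideanSpace ℝ (Fin n) → EuclideanSpace ℝ (Fin n))
    (hX : ∀ x, X x = x N • x - ((‖x‖ ^ 2 + 1) / 2) • EuclideanSpace.single N 1)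
    (F : EuclideanSpace ℝ (Fin n) → EuclideanSpace ℝ (Fin n))
    (hF : ∀ y, F y = u y • X y - (⟪X y, gradient u y⟫ : ℝ) • gradient u y) :
    ∀ x ∈ Ω, dvg n F x
      = n * x N * u x - x N * ‖gradient u x‖ ^ 2
        - (1 / 2) * fderiv ℝ (fun y => ‖gradient u y‖ ^ 2) x (X x) := by
  intro x hx
  set g : Fin n → EuclideanSpace ℝ (Fin n) → ℝ :=
    fun j y => fderiv ℝ u y (EuclideanSpace.single j 1) with hg
  set K : Fin n → Fin n → ℝ :=
    fun i j => fderiv ℝ (g j) x (EuclideanSpace.single i 1) with hK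
  have hΩx : Ω ∈ nhds x := hΩ.mem_nhds hx
  have hu1 : ContDiffOn ℝ 1 (fderiv ℝ u) Ω := hu.fderiv_of_isOpen hΩ (by norm_num)
  have hgC : ∀ j, ContDiffOn ℝ 1 (g j) Ω := fun j => hu1.clm_apply contDiffOn_const
  have hgd : ∀ j, DifferentiableAt ℝ (g j) x := fun j =>
    ((hgC j).differentiableOn one_ne_zero).differentiableAt hΩx
  have hud : ∀ y ∈ Ω, DifferentiableAt ℝ u y := fun y hy =>
    (hu.differentiableOn two_ne_zero).differentiableAt (hΩ.mem_nhds hy)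
  have hd2 : DifferentiableAt ℝ (fderiv ℝ u) x :=
    (hu1.differentiableOn one_ne_zero).differentiableAt hΩx
  have hsec := second_derivative_symmetric_of_eventually
    (f := u) (f' := fderiv ℝ u) (f'' := fderiv ℝ (fderiv ℝ u) x) (x := x)
    (Filter.eventually_of_mem hΩx (fun y hy => (hud y hy).hasFDerivAt)) hd2.hasFDerivAt
  have hKf : ∀ i j, K i j
      = fderiv ℝ (fderiv ℝ u) x (EuclideanSpace.single i 1) (EuclideanSpace.single j 1) := by
    intro i j
    show (fderiv ℝ (g j) x) (EuclideanSpace.single i 1) = _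
    have h : fderiv ℝ (g j) x
        = fderiv ℝ (fun y => (fderiv ℝ u y) (EuclideanSpace.single j 1)) x := rfl
    rw [h, fderiv_clm_apply hd2 (differentiableAt_const _)]
    simp
  have hsymm : ∀ i j, K i j = K j i := by
    intro i j; rw [hKf, hKf]; exact hsec _ _
  -- projections
  set pr : Fin n → (EuclideanSpace ℝ (Fin n) →L[ℝ] ℝ) :=
    fun k => PiLp.proj (𝕜 := ℝ) 2 (fun _ : Fin n => ℝ) k with hpr
  have hprd : ∀ (k : Fin n), HasFDerivAt (fun y : EuclideanSpace ℝ (Fin n) => y k) (pr k) x :=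
    fun k => PiLp.hasFDerivAt_apply 2 x k
  -- coordinates of X
  have hXfun : ∀ j, (fun y => X y j)
      = fun y : EuclideanSpace ℝ (Fin n) =>
          y N * y j - (if j = N then ((∑ k, y k * y k) + 1) / 2 else 0) := by
    intro j
    funext y
    rw [hX y]
    have hns := norm_sq_expand y
    simp [EuclideanSpace.single_apply, hns, PiLp.sub_apply, PiLp.smul_apply, smul_eq_mul,
      mul_ite, mul_one, mul_zero]
  set DX : Fin n → (EuclideanSpace ℝ (Fin n) →L[ℝ] ℝ) :=
    fun j => x N • pr j + x j • pr N - (if j = N then ∑ k, x k • pr k else 0) with hDXdef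
  have hXd : ∀ j, HasFDerivAt (fun y => X y j) (DX j) x := by
    intro j
    rw [hXfun j, hDXdef]
    have hb : HasFDerivAt (fun y : EuclideanSpace ℝ (Fin n) => y N * y j)
        (x N • pr j + x j • pr N) x := (hprd N).mul (hprd j)
    by_cases hj : j = N
    · simp only [if_pos hj]
      refine hb.sub ?_
      have hq : HasFDerivAt (fun y : EuclideanSpace ℝ (Fin n) => ∑ k, y k * y k)
          (∑ k, (x k • pr k + x k • pr k)) x :=
        HasFDerivAt.fun_sum (fun k _ => (hprd k).mul (hprd k))
      have hfe : (fun y : EuclideanSpace ℝ (Fin n) => ((∑ k, y k * y k) + 1) / 2)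
          = fun y => (2:ℝ)⁻¹ * ((∑ k, y k * y k) + 1) := by funext y; ring
      rw [hfe]
      have h2 := (hq.add_const 1).const_mul ((2:ℝ)⁻¹)
      convert h2 using 1
      ext v
      simp [Finset.sum_add_distrib, Finset.mul_sum]
      rw [Finset.smul_sum]
      exact Finset.sum_congr rfl fun k _ => by rw [← two_smul ℝ (x k • pr k), smul_smul]; norm_num
    · simp only [if_neg hj]
      simpa using hb.sub_const 0
  have hDXe : ∀ i j, DX j (EuclideanSpace.single i 1)
      = (if j = i then x N else 0) + (if N = i then x j else 0)
        - (if j = N then x i else 0) := by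
    intro i j
    rw [hDXdef]
    simp only [ContinuousLinearMap.sub_apply, ContinuousLinearMap.add_apply,
      ContinuousLinearMap.smul_apply, smul_eq_mul,
      apply_ite (fun ℓ : EuclideanSpace ℝ (Fin n) →L[ℝ] ℝ => ℓ (EuclideanSpace.single i 1)),
      ContinuousLinearMap.zero_apply, ContinuousLinearMap.sum_apply]
    simp [hpr, EuclideanSpace.single_apply, mul_ite]
  -- derivative CLMs
  set Du : EuclideanSpace ℝ (Fin n) →L[ℝ] ℝ := fderiv ℝ u x with hDu
  set Dg : Fin n → (EuclideanSpace ℝ (Fin n) →L[ℝ] ℝ) := fun j => fderiv ℝ (g j) x with hDg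
  have hDue : ∀ i, Du (EuclideanSpace.single i 1) = g i x := fun i => rfl
  have hDge : ∀ i j, Dg j (EuclideanSpace.single i 1) = K i j := fun i j => rfl
  set c0 : ℝ := ∑ j, X x j * g j x with hc0
  set Dc : EuclideanSpace ℝ (Fin n) →L[ℝ] ℝ := ∑ j, (X x j • Dg j + g j x • DX j) with hDc
  have hcd : HasFDerivAt (fun y => ∑ j, X y j * g j y) Dc x := by
    rw [hDc]
    exact HasFDerivAt.fun_sum fun j _ => (hXd j).mul (hgd j).hasFDerivAt
  -- coordinates of F
  have hgrad : ∀ (y : EuclideanSpace ℝ (Fin n)) (j : Fin n), gradient u y j = g j y :=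
    fun y j => grad_apply u y j
  have hFfun : ∀ i, (fun y => F y i)
      = fun y => u y * X y i - (∑ j, X y j * g j y) * g i y := by
    intro i; funext y
    rw [hF y]
    have h1 : (⟪X y, gradient u y⟫ : ℝ) = ∑ j, X y j * g j y := by
      rw [inner_expand]; exact Finset.sum_congr rfl fun j _ => by rw [hgrad]
    simp [PiLp.sub_apply, PiLp.smul_apply, smul_eq_mul, h1, hgrad]
  set L : Fin n → (EuclideanSpace ℝ (Fin n) →L[ℝ] ℝ) :=
    fun i => (u x • DX i + X x i • Du) - (c0 • Dg i + g i x • Dc) with hL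
  have hFd : ∀ i, HasFDerivAt (fun y => F y i) (L i) x := by
    intro i
    rw [hFfun i, hL]
    exact ((hud x hx).hasFDerivAt.mul (hXd i)).sub (hcd.mul (hgd i).hasFDerivAt)
  have hdvg : dvg n F x = ∑ i, L i (EuclideanSpace.single i 1) := by
    unfold dvg pd
    exact Finset.sum_congr rfl fun i _ => by rw [(hFd i).fderiv]
  -- evaluate L i (e i)
  have hDXii : ∀ i, DX i (EuclideanSpace.single i 1) = x N := by
    intro i
    rw [hDXe i i]
    rcases eq_or_ne i N with h | h
    · simp [h]
    · simp [h, Ne.symm h]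
  have hLie : ∀ i, L i (EuclideanSpace.single i 1)
      = u x * x N + X x i * g i x - (c0 * K i i + g i x * Dc (EuclideanSpace.single i 1)) := by
    intro i
    rw [hL]
    simp only [ContinuousLinearMap.sub_apply, ContinuousLinearMap.add_apply,
      ContinuousLinearMap.smul_apply, smul_eq_mul]
    rw [hDXii i, hDue i, hDge i i]
  have hDce : ∀ i, Dc (EuclideanSpace.single i 1)
      = (∑ j, X x j * K i j)
        + (x N * g i x + (if N = i then (∑ j, g j x * x j) else 0) - g N x * x i) := by
    intro i
    rw [hDc]
    simp only [ContinuousLinearMap.sum_apply, ContinuousLinearMap.add_apply,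
      ContinuousLinearMap.smul_apply, smul_eq_mul]
    rw [Finset.sum_add_distrib]
    have hA : (∑ j, X x j * (Dg j) (EuclideanSpace.single i 1)) = ∑ j, X x j * K i j :=
      Finset.sum_congr rfl fun j _ => by rw [hDge i j]
    have h : ∀ j : Fin n, g j x * DX j (EuclideanSpace.single i 1)
        = (if j = i then x N * g j x else 0) + (if N = i then g j x * x j else 0)
          - (if j = N then g j x else 0) * x i := by
      intro j; rw [hDXe i j]; split_ifs <;> ring
    have hB : (∑ j, g j x * (DX j) (EuclideanSpace.single i 1))
        = x N * g i x + (if N = i then (∑ j, g j x * x j) else 0) - g N x * x i := by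
      rw [Finset.sum_congr rfl fun j _ => h j, Finset.sum_sub_distrib, Finset.sum_add_distrib,
        ← Finset.sum_mul]
      have h1 : (∑ j, if j = i then x N * g j x else 0) = x N * g i x := by simp
      have h2 : (∑ j, if N = i then g j x * x j else 0)
          = if N = i then (∑ j, g j x * x j) else 0 := by split_ifs <;> simp
      have h3 : (∑ j, if j = N then g j x else 0) = g N x := by simp
      rw [h1, h2, h3]
    rw [hA, hB]
  -- assemble the sum
  have hsum : dvg n F x
      = ((∑ _i : Fin n, (u x * x N)) + ∑ i, X x i * g i x)
        - ((∑ i, c0 * K i i)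
           + (∑ i, g i x * ((∑ j, X x j * K i j)
               + (x N * g i x + (if N = i then (∑ j, g j x * x j) else 0) - g N x * x i)))) := by
    rw [hdvg]
    rw [Finset.sum_congr rfl fun i _ => by rw [hLie i, hDce i]]
    rw [Finset.sum_sub_distrib, Finset.sum_add_distrib, Finset.sum_add_distrib]
  have e1 : (∑ _i : Fin n, (u x * x N)) = n * (u x * x N) := by
    simp [Finset.sum_const, Fintype.card_fin, nsmul_eq_mul]
  have e2 : (∑ i, X x i * g i x) = c0 := by rw [hc0]
  have hl : (∑ i, K i i) = 1 := by
    have h := hΔ x hx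
    unfold lap pd at h
    simp only [hK, hg]
    exact h
  have e3 : (∑ i, c0 * K i i) = c0 := by rw [← Finset.mul_sum, hl, mul_one]
  have e4 : (∑ i, g i x * ((∑ j, X x j * K i j)
        + (x N * g i x + (if N = i then (∑ j, g j x * x j) else 0) - g N x * x i)))
      = (∑ i, g i x * (∑ j, X x j * K i j)) + x N * (∑ k, g k x * g k x) := by
    have h : ∀ i : Fin n, g i x * ((∑ j, X x j * K i j)
          + (x N * g i x + (if N = i then (∑ j, g j x * x j) else 0) - g N x * x i))
        = g i x * (∑ j, X x j * K i j)
          + (x N * (g i x * g i x) + (if N = i then g i x * (∑ j, g j x * x j) else 0)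
            - (g i x * x i) * g N x) := by
      intro i; split_ifs <;> ring
    rw [Finset.sum_congr rfl fun i _ => h i, Finset.sum_add_distrib]
    congr 1
    rw [Finset.sum_sub_distrib, Finset.sum_add_distrib, ← Finset.mul_sum, ← Finset.sum_mul]
    have h2 : (∑ i, if N = i then g i x * (∑ j, g j x * x j) else 0)
        = g N x * (∑ j, g j x * x j) := by simp
    rw [h2]
    ring
  have hT : (∑ i, g i x * (∑ j, X x j * K i j)) = ∑ j, g j x * (∑ i, X x i * K i j) := by
    refine Finset.sum_congr rfl fun i _ => ?_
    have : (∑ j, X x j * K i j) = ∑ j, X x j * K j i :=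
      Finset.sum_congr rfl fun j _ => by rw [hsymm i j]
    rw [this]
  -- the fderiv of the gradient-square term
  have hRfun : (fun y => ‖gradient u y‖ ^ 2) = fun y => ∑ j, g j y * g j y := by
    funext y; rw [norm_sq_expand]; exact Finset.sum_congr rfl fun j _ => by rw [hgrad]
  have hRd : HasFDerivAt (fun y => ∑ j, g j y * g j y) (∑ j, (g j x • Dg j + g j x • Dg j)) x :=
    HasFDerivAt.fun_sum fun j _ => (hgd j).hasFDerivAt.mul (hgd j).hasFDerivAt
  have hDgX : ∀ j, Dg j (X x) = ∑ i, X x i * K i j := by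
    intro j
    rw [clm_expand]
    try exact Finset.sum_congr rfl fun i _ => by rw [hDge i j]
  have hRe : fderiv ℝ (fun y => ‖gradient u y‖ ^ 2) x (X x)
      = ∑ j, (g j x * (∑ i, X x i * K i j) + g j x * (∑ i, X x i * K i j)) := by
    rw [hRfun, hRd.fderiv]
    simp only [ContinuousLinearMap.sum_apply, ContinuousLinearMap.add_apply,
      ContinuousLinearMap.smul_apply, smul_eq_mul]
    exact Finset.sum_congr rfl fun j _ => by rw [hDgX j]
  have hnormx : ‖gradient u x‖ ^ 2 = ∑ k, g k x * g k x := by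
    rw [norm_sq_expand]; exact Finset.sum_congr rfl fun k _ => by rw [hgrad]
  rw [hsum, e1, e2, e3, e4, hT, hRe, hnormx, Finset.sum_add_distrib]
  ring
end
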